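/- (Lemma 2.1(i)) Given two admissible 1D primitive states U⁻ and U⁺ with the HLLC wave speeds s⁻ = min(s_min(U⁻), s_min(U⁺)) and s⁺ = max(s_max(U⁻), s_max(U⁺)), the quantities A⁻ = s⁻E⁻ - m⁻ and A⁺ = s⁺E⁺ - m⁺ satisfy A⁻ < 0 and A⁺ > 0. -/

import Mathlib

noncomputable section

namespace SRHD1D

/-- Lorentz factor `γ = (1 - u²)^(-1/2)`. -/
def lorentz (u : ℝ) : ℝ := 1 / Real.sqrt (1 - u ^ 2)

/-- Specific enthalpy `h = 1 + Γ p / ((Γ - 1) ρ)` of a perfect gas. -/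
def enthalpy (G r p : ℝ) : ℝ := 1 + G * p / ((G - 1) * r)

/-- Sound speed `c_s = √(Γ p / (ρ h))`. -/
def soundSpeed (G r p : ℝ) : ℝ := Real.sqrt (G * p / (r * enthalpy G r p))

/-- Conserved rest-mass density `D = ρ γ`. -/
def Dc (r u : ℝ) : ℝ := r * lorentz u

/-- Conserved momentum `m = ρ h γ² u`. -/
def mc (G r u p : ℝ) : ℝ := r * enthalpy G r p * lorentz u ^ 2 * u

/-- Conserved total energy `E = ρ h γ² - p`. -/
def Ec (G r u p : ℝ) : ℝ := r * enthalpy G r p * lorentz u ^ 2 - p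

/-- Minimum characteristic speed `s_min = (u - c_s)/(1 - c_s u)`. -/
def sMin (G r u p : ℝ) : ℝ := (u - soundSpeed G r p) / (1 - soundSpeed G r p * u)

/-- Maximum characteristic speed `s_max = (u + c_s)/(1 + c_s u)`. -/
def sMax (G r u p : ℝ) : ℝ := (u + soundSpeed G r p) / (1 + soundSpeed G r p * u)

set_option maxHeartbeats 1600000 in
lemma key (G r u p : ℝ) (hG1 : 1 < G) (hG2 : G ≤ 2) (hr : 0 < r) (hu : |u| < 1)
    (hp : 0 < p) :
    sMin G r u p * Ec G r u p - mc G r u p < 0 ∧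
    0 < sMax G r u p * Ec G r u p - mc G r u p ∧ 0 < Ec G r u p := by
  obtain ⟨hu1, hu2⟩ := abs_lt.mp hu
  have hG0 : 0 < G - 1 := by linarith
  have hD2 : 0 < 1 - u ^ 2 := by nlinarith
  set h := enthalpy G r p with hh
  set c := soundSpeed G r p with hc
  set q := p / (G - 1) with hqdef
  have hq : p = q * (G - 1) := by rw [hqdef]; field_simp
  have hq0 : 0 < q := by rw [hqdef]; positivity
  have hrh : r * h = r + G * q := by
    rw [hh, enthalpy, hqdef]; field_simp
  have hrh0 : 0 < r * h := by rw [hrh]; positivity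
  have hh0 : 0 < h := by nlinarith [hrh0]
  have he1 : r * h - p = r + q := by rw [hrh, hq]; ring
  have hrhp : p < r * h - p := by rw [he1, hq]; nlinarith
  have hc2 : c ^ 2 = G * p / (r * h) := by
    rw [hc, soundSpeed, ← hh, sq]
    exact Real.mul_self_sqrt (by positivity)
  have hc0 : 0 < c := by
    rw [hc, soundSpeed, ← hh]
    exact Real.sqrt_pos.mpr (by positivity)
  clear_value c h q
  have hsq : p ^ 2 < c ^ 2 * (r * h - p) ^ 2 := by
    rw [hc2, div_mul_eq_mul_div, lt_div_iff₀ hrh0, he1, hrh, hq]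
    have h4 : q * (G - 1) * (r + G * q) < G * (r + q) ^ 2 := by
      nlinarith [mul_pos hq0 hr, mul_pos hq0 hq0, mul_pos hr hr]
    have h5 := mul_lt_mul_of_pos_left h4 (mul_pos hq0 hG0)
    nlinarith [h5]
  have hkey : p < c * (r * h - p) :=
    lt_of_pow_lt_pow_left₀ 2 (le_of_lt (mul_pos hc0 (by linarith)))
      (by rw [mul_pow]; exact hsq)
  have hc2lt : c ^ 2 < 1 := by
    rw [hc2, div_lt_one hrh0, hrh, hq]; nlinarith
  have hc1 : c < 1 := lt_of_pow_lt_pow_left₀ 2 zero_le_one (by simpa using hc2lt)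
  have hcu1 : 0 < 1 - c * u := by
    have := mul_lt_mul_of_pos_left hu2 hc0
    have := mul_lt_mul_of_pos_left hu1 hc0
    nlinarith
  have hcu2 : 0 < 1 + c * u := by
    have := mul_lt_mul_of_pos_left hu2 hc0
    have := mul_lt_mul_of_pos_left hu1 hc0
    nlinarith
  have hγ : lorentz u ^ 2 = 1 / (1 - u ^ 2) := by
    rw [lorentz, div_pow, one_pow, Real.sq_sqrt (le_of_lt hD2)]
  have hE : 0 < Ec G r u p := by
    rw [Ec, ← hh, hγ]
    have h1 : r * h ≤ r * h * (1 / (1 - u ^ 2)) := by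
      rw [mul_one_div, le_div_iff₀ hD2]; nlinarith
    linarith
  refine ⟨?_, ?_, hE⟩
  · rw [sMin, Ec, mc, ← hh, ← hc, hγ]
    have he : (u - c) / (1 - c * u) * (r * h * (1 / (1 - u ^ 2)) - p) -
        r * h * (1 / (1 - u ^ 2)) * u = -((c * (r * h - p) + u * p) / (1 - c * u)) := by
      have := hcu1.ne'
      have := hcu2.ne'
      have := hD2.ne'
      have : 1 - u * c ≠ 0 := by rw [mul_comm]; exact hcu1.ne'
      have : 1 + u * c ≠ 0 := by rw [mul_comm]; exact hcu2.ne'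
      field_simp
      ring
    rw [he, neg_lt_zero]
    apply div_pos _ hcu1
    nlinarith
  · rw [sMax, Ec, mc, ← hh, ← hc, hγ]
    have he : (u + c) / (1 + c * u) * (r * h * (1 / (1 - u ^ 2)) - p) -
        r * h * (1 / (1 - u ^ 2)) * u = (c * (r * h - p) - u * p) / (1 + c * u) := by
      have := hcu1.ne'
      have := hcu2.ne'
      have := hD2.ne'
      have : 1 - u * c ≠ 0 := by rw [mul_comm]; exact hcu1.ne'
      have : 1 + u * c ≠ 0 := by rw [mul_comm]; exact hcu2.ne'
      field_simp
      ring
    rw [he]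
    apply div_pos _ hcu2
    nlinarith

theorem hllc_A_sign (G r1 u1 p1 r2 u2 p2 sm sp A1 A2 B1 B2 : ℝ)
    (hG1 : 1 < G) (hG2 : G ≤ 2)
    (hr1 : 0 < r1) (hu1 : |u1| < 1) (hp1 : 0 < p1)
    (hr2 : 0 < r2) (hu2 : |u2| < 1) (hp2 : 0 < p2)
    (hsm : sm = min (sMin G r1 u1 p1) (sMin G r2 u2 p2))
    (hsp : sp = max (sMax G r1 u1 p1) (sMax G r2 u2 p2))
    (hA1 : A1 = sm * Ec G r1 u1 p1 - mc G r1 u1 p1)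
    (hA2 : A2 = sp * Ec G r2 u2 p2 - mc G r2 u2 p2)
    (hB1 : B1 = mc G r1 u1 p1 * (sm - u1) - p1)
    (hB2 : B2 = mc G r2 u2 p2 * (sp - u2) - p2)
    :
    A1 < 0 ∧ 0 < A2 := by
  obtain ⟨k1, _, kE1⟩ := key G r1 u1 p1 hG1 hG2 hr1 hu1 hp1
  obtain ⟨_, k2, kE2⟩ := key G r2 u2 p2 hG1 hG2 hr2 hu2 hp2
  have h1 : sm ≤ sMin G r1 u1 p1 := hsm ▸ min_le_left _ _
  have h2 : sMax G r2 u2 p2 ≤ sp := hsp ▸ le_max_right _ _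
  constructor
  · have := mul_le_mul_of_nonneg_right h1 kE1.le
    linarith
  · have := mul_le_mul_of_nonneg_right h2 kE2.le
    linarith

end SRHD1D
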